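/- Let O be a discrete valuation ring with maximal ideal m and finite residue field k = O/m, let O₂ = O/m², κ₀ : O₂ → k the quotient map, κ : GLₙ(O₂) → GLₙ(k) the induced reduction homomorphism, and K = ker κ. Fix a nontrivial character ψ : (k,+) → ℂˣ and a generator π of the ideal m·O₂. Then for every A ∈ Mₙ(k), the stabilizer of the character ψ_A of K under the conjugation action of GLₙ(O₂) equals the preimage under κ of the centralizer of A: T(ψ_A) = κ⁻¹( Z_{GLₙ(k)}(A) ), where Z_{GLₙ(k)}(A) = { g ∈ GLₙ(k) : gA = Ag }. -/

import Mathlib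

open Matrix

/-- The stabilizer `T(θ)` of a character `θ` of a normal subgroup `N` under the
conjugation action of `G`. -/
def charStabilizer {G : Type*} [Group G] (N : Subgroup G) [hN : N.Normal]
    (θ : ↥N →* ℂˣ) : Subgroup G where
  carrier := {g : G | ∀ (x : G) (hx : x ∈ N),
    θ ⟨g * x * g⁻¹, hN.conj_mem x hx g⟩ = θ ⟨x, hx⟩}
  one_mem' := by intro x hx; simp
  mul_mem' := by
    intro a b ha hb x hx
    have h2 := ha (b * x * b⁻¹) (hN.conj_mem x hx b)
    rw [hb x hx] at h2
    rw [← h2]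
    exact congrArg θ (Subtype.ext (by group))
  inv_mem' := by
    intro a ha x hx
    have h := ha (a⁻¹ * x * a⁻¹⁻¹) (hN.conj_mem x hx a⁻¹)
    rw [← h]
    exact congrArg θ (Subtype.ext (by group))

/-- The reduction map `O/m² → O/m = k`. -/
noncomputable def redRes (O : Type) [CommRing O] [IsLocalRing O] :
    O ⧸ (IsLocalRing.maximalIdeal O ^ 2) →+* IsLocalRing.ResidueField O :=
  Ideal.Quotient.factor (S := IsLocalRing.maximalIdeal O ^ 2) (T := IsLocalRing.maximalIdeal O)
    (Ideal.pow_le_self two_ne_zero)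

/-- The reduction homomorphism `κ : GLₙ(O/m²) → GLₙ(k)`. -/
noncomputable def redGL (O : Type) [CommRing O] [IsLocalRing O] (n : ℕ) :
    GL (Fin n) (O ⧸ (IsLocalRing.maximalIdeal O ^ 2)) →*
      GL (Fin n) (IsLocalRing.ResidueField O) :=
  Matrix.GeneralLinearGroup.map (redRes O)


section Aux

open IsLocalRing

lemma mem_charStabilizer_iff {G : Type*} [Group G] (N : Subgroup G) [hN : N.Normal]
    (θ : ↥N →* ℂˣ) (g : G) :
    g ∈ charStabilizer N θ ↔ ∀ (x : G) (hx : x ∈ N),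
      θ ⟨g * x * g⁻¹, hN.conj_mem x hx g⟩ = θ ⟨x, hx⟩ := Iff.rfl

lemma redRes_mk (O : Type) [CommRing O] [IsLocalRing O] (a : O) :
    redRes O (Ideal.Quotient.mk (maximalIdeal O ^ 2) a)
      = Ideal.Quotient.mk (maximalIdeal O) a := Ideal.Quotient.factor_mk _ a

lemma redRes_surj (O : Type) [CommRing O] [IsLocalRing O] :
    Function.Surjective (redRes O) := by
  intro x
  obtain ⟨a, rfl⟩ := Ideal.Quotient.mk_surjective x
  exact ⟨Ideal.Quotient.mk _ a, redRes_mk O a⟩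

lemma redRes_ker (O : Type) [CommRing O] [IsLocalRing O]
    (x : O ⧸ (maximalIdeal O ^ 2)) (hx : redRes O x = 0) :
    x ∈ Ideal.map (Ideal.Quotient.mk (maximalIdeal O ^ 2)) (maximalIdeal O) := by
  obtain ⟨a, rfl⟩ := Ideal.Quotient.mk_surjective x
  erw [redRes_mk, Ideal.Quotient.eq_zero_iff_mem] at hx
  exact Ideal.mem_map_of_mem _ hx

lemma trace_mul_std {n : ℕ} {k : Type*} [CommRing k] (C : Matrix (Fin n) (Fin n) k)
    (i j : Fin n) (c : k) :
    Matrix.trace (C * Matrix.single j i c) = C i j * c := by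
  simp [Matrix.trace, Matrix.mul_apply, Matrix.single, Matrix.diag,
    Finset.sum_ite_eq, ite_and]

lemma nondeg {n : ℕ} {k : Type*} [Field k] (ψ : AddChar k ℂˣ) (hψ : ∃ x, ψ x ≠ 1)
    (C : Matrix (Fin n) (Fin n) k)
    (h : ∀ M : Matrix (Fin n) (Fin n) k, ψ (Matrix.trace (C * M)) = 1) : C = 0 := by
  obtain ⟨x, hx⟩ := hψ
  ext i j
  by_contra hC
  have h1 := h (Matrix.single j i (x / C i j))
  rw [trace_mul_std, mul_div_cancel₀ x hC] at h1
  exact hx h1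

end Aux

set_option maxHeartbeats 1600000 in
/-- Let `O` be a discrete valuation ring with finite residue field `k`, `O₂ = O/m²`,
`κ : GLₙ(O₂) → GLₙ(k)` the reduction homomorphism and `K = ker κ`.  Fix a nontrivial
additive character `ψ` of `k`, a generator `π` of `m·O₂`, and let `ψ_A` be the
character of `K` given by `ψ_A(1 + π·Y) = ψ(Tr(A·Ȳ))`.  Then the stabilizer of `ψ_A`
in `GLₙ(O₂)` is the preimage under `κ` of the centralizer of `A` in `GLₙ(k)`. -/
theorem charStabilizer_eq_comap_centralizer
    (O : Type) [CommRing O] [IsDomain O] [IsDiscreteValuationRing O]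
    [Finite (IsLocalRing.ResidueField O)] (n : ℕ)
    (π : O ⧸ (IsLocalRing.maximalIdeal O ^ 2))
    (hπ : Ideal.span {π} =
      Ideal.map (Ideal.Quotient.mk (IsLocalRing.maximalIdeal O ^ 2))
        (IsLocalRing.maximalIdeal O))
    (ψ : AddChar (IsLocalRing.ResidueField O) ℂˣ) (hψ : ∃ x, ψ x ≠ 1)
    (A : Matrix (Fin n) (Fin n) (IsLocalRing.ResidueField O))
    (θ : ↥(redGL O n).ker →* ℂˣ)
    (hθ : ∀ (x : ↥(redGL O n).ker)
        (Y : Matrix (Fin n) (Fin n) (O ⧸ (IsLocalRing.maximalIdeal O ^ 2))),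
      ((x : GL (Fin n) (O ⧸ (IsLocalRing.maximalIdeal O ^ 2))) :
          Matrix (Fin n) (Fin n) (O ⧸ (IsLocalRing.maximalIdeal O ^ 2))) = 1 + π • Y →
      θ x = ψ (Matrix.trace (A * Y.map (redRes O)))) :
    (charStabilizer (redGL O n).ker θ : Set (GL (Fin n) (O ⧸ (IsLocalRing.maximalIdeal O ^ 2)))) =
      (redGL O n) ⁻¹' {g : GL (Fin n) (IsLocalRing.ResidueField O) |
        (↑g : Matrix (Fin n) (Fin n) (IsLocalRing.ResidueField O)) * A =
          A * (↑g : Matrix (Fin n) (Fin n) (IsLocalRing.ResidueField O))} := by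
  classical
  -- basic facts about π
  have h1 : π ∈ Ideal.map (Ideal.Quotient.mk (IsLocalRing.maximalIdeal O ^ 2))
      (IsLocalRing.maximalIdeal O) := by
    rw [← hπ]; exact Ideal.mem_span_singleton_self π
  have hπ2 : π * π = 0 := by
    have h2 : π * π ∈ (Ideal.map (Ideal.Quotient.mk (IsLocalRing.maximalIdeal O ^ 2))
        (IsLocalRing.maximalIdeal O)) ^ 2 := by
      rw [← sq]; exact Ideal.pow_mem_pow h1 2
    have h3 : (Ideal.map (Ideal.Quotient.mk (IsLocalRing.maximalIdeal O ^ 2))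
        (IsLocalRing.maximalIdeal O)) ^ 2 = ⊥ := by
      rw [← Ideal.map_pow, Ideal.map_quotient_self]
    rw [h3] at h2
    exact h2
  have hπ0 : redRes O π = 0 := by
    obtain ⟨a, ha, rfl⟩ :=
      (Ideal.mem_map_iff_of_surjective _ Ideal.Quotient.mk_surjective).mp h1
    erw [redRes_mk, Ideal.Quotient.eq_zero_iff_mem]
    exact ha
  have hsq : ∀ Y : Matrix (Fin n) (Fin n) (O ⧸ (IsLocalRing.maximalIdeal O ^ 2)), (π • Y) * (π • Y) = 0 := by
    intro Y
    rw [Matrix.smul_mul, Matrix.mul_smul, smul_smul, hπ2, zero_smul]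
  have hmap1 : ∀ Y : Matrix (Fin n) (Fin n) (O ⧸ (IsLocalRing.maximalIdeal O ^ 2)),
      ((1 + π • Y : Matrix (Fin n) (Fin n) (O ⧸ (IsLocalRing.maximalIdeal O ^ 2)))).map (redRes O) = 1 := by
    intro Y
    have : ((1 + π • Y : Matrix (Fin n) (Fin n) (O ⧸ (IsLocalRing.maximalIdeal O ^ 2)))).map (redRes O)
        = (redRes O).mapMatrix (1 + π • Y) := rfl
    rw [this, map_add, _root_.map_one]
    have : (redRes O).mapMatrix (π • Y) = 0 := by
      ext i j
      simp [Matrix.smul_apply, smul_eq_mul, hπ0]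
    rw [this, add_zero]
  -- construction of elements of the kernel
  have unit_mem : ∀ Y : Matrix (Fin n) (Fin n) (O ⧸ (IsLocalRing.maximalIdeal O ^ 2)),
      ∃ x : ↥(redGL O n).ker,
        ((x : GL (Fin n) (O ⧸ (IsLocalRing.maximalIdeal O ^ 2))) : Matrix (Fin n) (Fin n) (O ⧸ (IsLocalRing.maximalIdeal O ^ 2))) = 1 + π • Y := by
    intro Y
    have hmul1 : (1 + π • Y) * (1 - π • Y) = (1 : Matrix (Fin n) (Fin n) (O ⧸ (IsLocalRing.maximalIdeal O ^ 2))) := by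
      rw [mul_one_sub, add_mul, one_mul, hsq Y]; abel
    have hmul2 : (1 - π • Y) * (1 + π • Y) = (1 : Matrix (Fin n) (Fin n) (O ⧸ (IsLocalRing.maximalIdeal O ^ 2))) := by
      rw [one_sub_mul, mul_add, mul_one, hsq Y]; abel
    refine ⟨⟨⟨1 + π • Y, 1 - π • Y, hmul1, hmul2⟩, ?_⟩, rfl⟩
    show redGL O n _ = 1
    exact Units.ext (hmap1 Y)
  -- values on a conjugate
  have key : ∀ (g x : GL (Fin n) (O ⧸ (IsLocalRing.maximalIdeal O ^ 2))) (h2 : g * x * g⁻¹ ∈ (redGL O n).ker)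
      (Y : Matrix (Fin n) (Fin n) (O ⧸ (IsLocalRing.maximalIdeal O ^ 2))),
      (x : Matrix (Fin n) (Fin n) (O ⧸ (IsLocalRing.maximalIdeal O ^ 2))) = 1 + π • Y →
      θ ⟨g * x * g⁻¹, h2⟩ =
        ψ (Matrix.trace ((((redGL O n g)⁻¹ : GL (Fin n) (IsLocalRing.ResidueField O)) : Matrix (Fin n) (Fin n) (IsLocalRing.ResidueField O)) * A *
          ((redGL O n g : GL (Fin n) (IsLocalRing.ResidueField O)) : Matrix (Fin n) (Fin n) (IsLocalRing.ResidueField O)) * Y.map (redRes O))) := by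
    intro g x h2 Y hY
    have hval : ((g * x * g⁻¹ : GL (Fin n) (O ⧸ (IsLocalRing.maximalIdeal O ^ 2))) : Matrix (Fin n) (Fin n) (O ⧸ (IsLocalRing.maximalIdeal O ^ 2)))
        = 1 + π • ((g : Matrix (Fin n) (Fin n) (O ⧸ (IsLocalRing.maximalIdeal O ^ 2))) * Y *
            ((g⁻¹ : GL (Fin n) (O ⧸ (IsLocalRing.maximalIdeal O ^ 2))) : Matrix (Fin n) (Fin n) (O ⧸ (IsLocalRing.maximalIdeal O ^ 2)))) := by
      show (g : Matrix (Fin n) (Fin n) (O ⧸ (IsLocalRing.maximalIdeal O ^ 2))) * (x : Matrix (Fin n) (Fin n) (O ⧸ (IsLocalRing.maximalIdeal O ^ 2))) *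
          ((g⁻¹ : GL (Fin n) (O ⧸ (IsLocalRing.maximalIdeal O ^ 2))) : Matrix (Fin n) (Fin n) (O ⧸ (IsLocalRing.maximalIdeal O ^ 2))) = _
      rw [hY, mul_add, mul_one, add_mul, Matrix.mul_smul, Matrix.smul_mul]
      congr 1
      exact_mod_cast g.mul_inv
    rw [hθ ⟨g * x * g⁻¹, h2⟩ _ hval]
    congr 1
    have hmm : ((g : Matrix (Fin n) (Fin n) (O ⧸ (IsLocalRing.maximalIdeal O ^ 2))) * Y *
          ((g⁻¹ : GL (Fin n) (O ⧸ (IsLocalRing.maximalIdeal O ^ 2))) : Matrix (Fin n) (Fin n) (O ⧸ (IsLocalRing.maximalIdeal O ^ 2)))).map (redRes O)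
        = ((redGL O n g : GL (Fin n) (IsLocalRing.ResidueField O)) : Matrix (Fin n) (Fin n) (IsLocalRing.ResidueField O)) * Y.map (redRes O) *
          (((redGL O n g)⁻¹ : GL (Fin n) (IsLocalRing.ResidueField O)) : Matrix (Fin n) (Fin n) (IsLocalRing.ResidueField O)) := by
      have e1 : ∀ M : Matrix (Fin n) (Fin n) (O ⧸ (IsLocalRing.maximalIdeal O ^ 2)), M.map (redRes O) = (redRes O).mapMatrix M :=
        fun _ => rfl
      rw [e1, _root_.map_mul, _root_.map_mul]
      have e2 : (redRes O).mapMatrix ((g⁻¹ : GL (Fin n) (O ⧸ (IsLocalRing.maximalIdeal O ^ 2))) : Matrix (Fin n) (Fin n) (O ⧸ (IsLocalRing.maximalIdeal O ^ 2)))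
          = (((redGL O n g)⁻¹ : GL (Fin n) (IsLocalRing.ResidueField O)) : Matrix (Fin n) (Fin n) (IsLocalRing.ResidueField O)) := by
        rw [← map_inv]; rfl
      rw [e2]; rfl
    rw [hmm]
    set G : Matrix (Fin n) (Fin n) (IsLocalRing.ResidueField O) := ((redGL O n g : GL (Fin n) (IsLocalRing.ResidueField O)) : Matrix (Fin n) (Fin n) (IsLocalRing.ResidueField O))
    set G' : Matrix (Fin n) (Fin n) (IsLocalRing.ResidueField O) :=
      (((redGL O n g)⁻¹ : GL (Fin n) (IsLocalRing.ResidueField O)) : Matrix (Fin n) (Fin n) (IsLocalRing.ResidueField O))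
    set M : Matrix (Fin n) (Fin n) (IsLocalRing.ResidueField O) := Y.map (redRes O)
    calc Matrix.trace (A * (G * M * G'))
        = Matrix.trace ((A * G * M) * G') := by rw [← mul_assoc, ← mul_assoc]
      _ = Matrix.trace (G' * (A * G * M)) := Matrix.trace_mul_comm _ _
      _ = Matrix.trace (G' * A * G * M) := by rw [← mul_assoc, ← mul_assoc]
  -- decomposition of kernel elements
  have decomp : ∀ x : GL (Fin n) (O ⧸ (IsLocalRing.maximalIdeal O ^ 2)), x ∈ (redGL O n).ker →
      ∃ Y : Matrix (Fin n) (Fin n) (O ⧸ (IsLocalRing.maximalIdeal O ^ 2)), (x : Matrix (Fin n) (Fin n) (O ⧸ (IsLocalRing.maximalIdeal O ^ 2))) = 1 + π • Y := by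
    intro x hx
    have h1 : ((x : Matrix (Fin n) (Fin n) (O ⧸ (IsLocalRing.maximalIdeal O ^ 2))).map (redRes O)) = 1 := congrArg Units.val hx
    have h2 : ∀ i j : Fin n, ∃ c : (O ⧸ (IsLocalRing.maximalIdeal O ^ 2)),
        π * c = (x : Matrix (Fin n) (Fin n) (O ⧸ (IsLocalRing.maximalIdeal O ^ 2))) i j - (1 : Matrix (Fin n) (Fin n) (O ⧸ (IsLocalRing.maximalIdeal O ^ 2))) i j := by
      intro i j
      have h3 : redRes O ((x : Matrix (Fin n) (Fin n) (O ⧸ (IsLocalRing.maximalIdeal O ^ 2))) i j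
          - (1 : Matrix (Fin n) (Fin n) (O ⧸ (IsLocalRing.maximalIdeal O ^ 2))) i j) = 0 := by
        rw [map_sub]
        have h4 := congrFun (congrFun h1 i) j
        rw [Matrix.map_apply] at h4
        have h5 : redRes O ((1 : Matrix (Fin n) (Fin n) (O ⧸ (IsLocalRing.maximalIdeal O ^ 2))) i j)
            = (1 : Matrix (Fin n) (Fin n) (IsLocalRing.ResidueField O)) i j := by
          by_cases h : i = j <;> simp [Matrix.one_apply, h]
        rw [h4, h5, sub_self]
      have h6 := redRes_ker O _ h3
      rw [← hπ] at h6
      obtain ⟨a, ha⟩ := Ideal.mem_span_singleton'.mp h6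
      exact ⟨a, by rw [mul_comm]; exact ha⟩
    choose Y hYs using h2
    refine ⟨Matrix.of Y, ?_⟩
    ext i j
    rw [Matrix.add_apply, Matrix.smul_apply, Matrix.of_apply, smul_eq_mul, hYs i j]
    ring
  -- main argument
  ext g
  simp only [SetLike.mem_coe, Set.mem_preimage, Set.mem_setOf_eq,
    mem_charStabilizer_iff]
  set G : Matrix (Fin n) (Fin n) (IsLocalRing.ResidueField O) := ((redGL O n g : GL (Fin n) (IsLocalRing.ResidueField O)) : Matrix (Fin n) (Fin n) (IsLocalRing.ResidueField O))
    with hG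
  set G' : Matrix (Fin n) (Fin n) (IsLocalRing.ResidueField O) :=
    (((redGL O n g)⁻¹ : GL (Fin n) (IsLocalRing.ResidueField O)) : Matrix (Fin n) (Fin n) (IsLocalRing.ResidueField O)) with hG'
  have hGG' : G * G' = 1 := by exact_mod_cast (redGL O n g).mul_inv
  have hG'G : G' * G = 1 := by exact_mod_cast (redGL O n g).inv_mul
  constructor
  · intro hg
    have hall : ∀ M : Matrix (Fin n) (Fin n) (IsLocalRing.ResidueField O),
        ψ (Matrix.trace ((G' * A * G) * M)) = ψ (Matrix.trace (A * M)) := by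
      intro M
      obtain ⟨Y, hYM⟩ : ∃ Y : Matrix (Fin n) (Fin n) (O ⧸ (IsLocalRing.maximalIdeal O ^ 2)), Y.map (redRes O) = M := by
        have := redRes_surj O
        choose Y hYs using fun (i : Fin n) (j : Fin n) => this (M i j)
        exact ⟨Matrix.of Y, by ext i j; exact hYs i j⟩
      obtain ⟨x, hxY⟩ := unit_mem Y
      have hgx := hg (x : GL (Fin n) (O ⧸ (IsLocalRing.maximalIdeal O ^ 2))) x.2
      rw [key g (x : GL (Fin n) (O ⧸ (IsLocalRing.maximalIdeal O ^ 2))) _ Y hxY] at hgx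
      have hxx : θ ⟨(x : GL (Fin n) (O ⧸ (IsLocalRing.maximalIdeal O ^ 2))), x.2⟩ = ψ (Matrix.trace (A * Y.map (redRes O))) :=
        hθ _ Y hxY
      rw [hxx] at hgx
      rw [← hYM]
      exact hgx
    have hzero : G' * A * G - A = 0 := by
      apply nondeg ψ hψ
      intro M
      rw [Matrix.sub_mul, Matrix.trace_sub, AddChar.map_sub_eq_div, hall M, div_self']
    have hE : G' * A * G = A := sub_eq_zero.mp hzero
    calc G * A = G * (G' * A * G) := by rw [hE]
      _ = (G * G') * A * G := by rw [← mul_assoc, ← mul_assoc]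
      _ = A * G := by rw [hGG', one_mul]
  · intro hcomm x hx
    obtain ⟨Y, hY⟩ := decomp x hx
    rw [key g x _ Y hY, hθ ⟨x, hx⟩ Y hY]
    have hE : G' * A * G = A := by rw [mul_assoc, ← hcomm, ← mul_assoc, hG'G, one_mul]
    congr 1
    rw [← hG, ← hG', hE]
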